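/- Let A ⊆ ℤ/pℤ, Γ ≤ (ℤ/pℤ)* a multiplicative subgroup, I = [p/3, 2p/3), Δ_ξ = |ξΓ ∩ I| - |I|/n, a_ξ = |ξΓ ∩ A ∩ (ℤ/pℤ)*| - |A ∩ (ℤ/pℤ)*|/n, where n is the index of Γ. Then for every coset α: (1/|Γ|) ∑_{x ∈ αΓ} |xA ∩ I| = |A∩(ℤ/pℤ)*|·|I|/(p-1) + (1/|Γ|) ∑_ξ a_ξ Δ_{αξ}. -/

import Mathlib

set_option maxHeartbeats 1000000

private lemma fiber_equiv_card {G : Type*} [CommGroup G] (Γ : Subgroup G) (P : G → Prop) (v : G) :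
    Nat.card {u : G // (QuotientGroup.mk u : G ⧸ Γ) = QuotientGroup.mk v ∧ P u}
      = Nat.card {γ : Γ // P (v * γ)} := by
  apply Nat.card_congr
  refine ⟨fun u => ⟨⟨v⁻¹ * u.1, ?_⟩, ?_⟩, fun γ => ⟨v * γ.1, ?_, ?_⟩, ?_, ?_⟩
  · have h := QuotientGroup.eq.mp u.2.1
    have h2 := Γ.inv_mem h
    simpa [mul_inv_rev] using h2
  · simpa [mul_inv_cancel_left] using u.2.2
  · rw [QuotientGroup.eq]
    simpa [mul_inv_rev, mul_assoc] using Γ.inv_mem γ.1.2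
  · exact γ.2
  · intro u; ext; simp
  · intro γ; ext; simp

/-- Averaging `|xA ∩ I|` over a coset `αΓ`:
`(1/|Γ|) ∑_{x ∈ αΓ} |xA ∩ I| = |A|·|I|/(p-1) + (1/|Γ|) ∑_ξ a_ξ Δ_{αξ}`,
where `Δ_ξ = |ξΓ ∩ I| - |I|/n` and `a_ξ = |ξΓ ∩ A| - |A|/n` (with `0 ∉ A`). -/
theorem coset_average_identity (p : ℕ) [Fact p.Prime] (hp : 3 < p)
    (A : Finset (ZMod p)) (h0 : (0 : ZMod p) ∉ A)
    (Γ : Subgroup (ZMod p)ˣ) (n : ℕ) (hn : n = Γ.index)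
    (I : Finset (ZMod p))
    (hI : I = Finset.univ.filter (fun x : ZMod p => p ≤ 3 * x.val ∧ 3 * x.val < 2 * p))
    (Δ a : ((ZMod p)ˣ ⧸ Γ) → ℝ)
    (hΔ : ∀ ξ : (ZMod p)ˣ, Δ (QuotientGroup.mk ξ) =
      (Nat.card {γ : Γ // (((ξ * (γ : (ZMod p)ˣ)) : (ZMod p)ˣ) : ZMod p) ∈ I} : ℝ)
        - (I.card : ℝ) / n)
    (ha : ∀ ξ : (ZMod p)ˣ, a (QuotientGroup.mk ξ) =
      (Nat.card {γ : Γ // (((ξ * (γ : (ZMod p)ˣ)) : (ZMod p)ˣ) : ZMod p) ∈ A} : ℝ)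
        - (A.card : ℝ) / n)
    (α : (ZMod p)ˣ) :
    (1 / (Nat.card Γ : ℝ)) * ∑ᶠ γ : Γ,
        (((A.image (fun t => (((α * (γ : (ZMod p)ˣ)) : (ZMod p)ˣ) : ZMod p) * t)) ∩ I).card : ℝ)
      = (A.card : ℝ) * (I.card : ℝ) / ((p : ℝ) - 1) +
        (1 / (Nat.card Γ : ℝ)) *
          ∑ᶠ ξ : (ZMod p)ˣ ⧸ Γ, a ξ * Δ (QuotientGroup.mk α * ξ) := by
  classical
  -- basic cardinalities
  have hnQ : Fintype.card ((ZMod p)ˣ ⧸ Γ) = n := by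
    rw [hn, Subgroup.index, Nat.card_eq_fintype_card]
  have hn0 : n ≠ 0 := by
    rw [← hnQ]; exact Fintype.card_ne_zero
  have hn0' : (n : ℝ) ≠ 0 := Nat.cast_ne_zero.mpr hn0
  have hΓ0 : (Nat.card Γ : ℝ) ≠ 0 := by
    rw [Nat.card_eq_fintype_card]
    exact Nat.cast_ne_zero.mpr Fintype.card_ne_zero
  have hmul : (n : ℝ) * (Nat.card Γ : ℝ) = (p : ℝ) - 1 := by
    have hG : Nat.card (ZMod p)ˣ = p - 1 := by
      rw [Nat.card_eq_fintype_card]; exact ZMod.card_units p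
    have h1 : Γ.index * Nat.card Γ = p - 1 := by
      rw [Subgroup.index_mul_card Γ, hG]
    have : ((Γ.index * Nat.card Γ : ℕ) : ℝ) = ((p - 1 : ℕ) : ℝ) := by rw [h1]
    rw [hn]
    push_cast [Nat.cast_sub (by omega : 1 ≤ p)] at this
    exact_mod_cast this
  have h0I : (0 : ZMod p) ∉ I := by
    subst hI
    simp only [Finset.mem_filter, Finset.mem_univ, true_and, ZMod.val_zero, mul_zero]
    omega
  -- the set of units lying in A
  set A' : Finset (ZMod p)ˣ := Finset.univ.filter (fun u => (u : ZMod p) ∈ A) with hA'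
  have hA'card : A'.card = A.card := by
    have himage : Finset.image Units.val A' = A := by
      ext t
      constructor
      · intro ht
        obtain ⟨u, hu, rfl⟩ := Finset.mem_image.mp ht
        exact (Finset.mem_filter.mp hu).2
      · intro ht
        exact Finset.mem_image.mpr ⟨Units.mk0 t (fun h => h0 (h ▸ ht)),
          Finset.mem_filter.mpr ⟨Finset.mem_univ _, ht⟩, rfl⟩
    rw [← himage]
    exact (Finset.card_image_of_injective A' Units.val_injective).symm
  -- fiber counts
  have haA : ∀ ξ : (ZMod p)ˣ ⧸ Γ,
      ((A'.filter (fun u => (QuotientGroup.mk u : (ZMod p)ˣ ⧸ Γ) = ξ)).card : ℝ)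
        = a ξ + (A.card : ℝ) / n := by
    intro ξ
    obtain ⟨v, rfl⟩ := QuotientGroup.mk_surjective ξ
    have h1 : A'.filter (fun u => (QuotientGroup.mk u : (ZMod p)ˣ ⧸ Γ) = QuotientGroup.mk v)
        = Finset.univ.filter (fun u : (ZMod p)ˣ =>
            ((QuotientGroup.mk u : (ZMod p)ˣ ⧸ Γ) = QuotientGroup.mk v) ∧ (u : ZMod p) ∈ A) := by
      rw [hA', Finset.filter_filter]
      exact Finset.filter_congr fun u _ => and_comm
    have h2 : (Finset.univ.filter (fun u : (ZMod p)ˣ =>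
            ((QuotientGroup.mk u : (ZMod p)ˣ ⧸ Γ) = QuotientGroup.mk v) ∧ (u : ZMod p) ∈ A)).card
        = Nat.card {u : (ZMod p)ˣ //
            ((QuotientGroup.mk u : (ZMod p)ˣ ⧸ Γ) = QuotientGroup.mk v) ∧ (u : ZMod p) ∈ A} := by
      rw [Nat.card_eq_fintype_card, Fintype.card_subtype]
    rw [h1, h2, fiber_equiv_card Γ (fun u => (u : ZMod p) ∈ A) v, ha v]
    ring
  have hΔA : ∀ ξ : (ZMod p)ˣ ⧸ Γ,
      ((Finset.univ.filter (fun u : (ZMod p)ˣ =>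
          ((QuotientGroup.mk u : (ZMod p)ˣ ⧸ Γ) = ξ) ∧ (u : ZMod p) ∈ I)).card : ℝ)
        = Δ ξ + (I.card : ℝ) / n := by
    intro ξ
    obtain ⟨v, rfl⟩ := QuotientGroup.mk_surjective ξ
    have h2 : (Finset.univ.filter (fun u : (ZMod p)ˣ =>
            ((QuotientGroup.mk u : (ZMod p)ˣ ⧸ Γ) = QuotientGroup.mk v) ∧ (u : ZMod p) ∈ I)).card
        = Nat.card {u : (ZMod p)ˣ //
            ((QuotientGroup.mk u : (ZMod p)ˣ ⧸ Γ) = QuotientGroup.mk v) ∧ (u : ZMod p) ∈ I} := by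
      rw [Nat.card_eq_fintype_card, Fintype.card_subtype]
    rw [h2, fiber_equiv_card Γ (fun u => (u : ZMod p) ∈ I) v, hΔ v]
    ring
  -- sum of a over all cosets is 0
  have hsuma : ∑ ξ : (ZMod p)ˣ ⧸ Γ, a ξ = 0 := by
    have h2 : ∑ ξ : (ZMod p)ˣ ⧸ Γ,
        (A'.filter (fun u => (QuotientGroup.mk u : (ZMod p)ˣ ⧸ Γ) = ξ)).card = A.card := by
      rw [← hA'card]
      exact (Finset.card_eq_sum_card_fiberwise
        (f := fun u => (QuotientGroup.mk u : (ZMod p)ˣ ⧸ Γ)) (t := Finset.univ)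
        (fun u _ => Finset.mem_univ _)).symm
    have h1 : ∑ ξ : (ZMod p)ˣ ⧸ Γ,
        ((A'.filter (fun u => (QuotientGroup.mk u : (ZMod p)ˣ ⧸ Γ) = ξ)).card : ℝ)
          = (A.card : ℝ) := by exact_mod_cast congrArg (Nat.cast (R := ℝ)) h2
    have h2 : ∑ ξ : (ZMod p)ˣ ⧸ Γ, (a ξ + (A.card : ℝ) / n) = (A.card : ℝ) := by
      exact (Finset.sum_congr rfl fun ξ _ => (haA ξ).symm).trans h1
    rw [Finset.sum_add_distrib, Finset.sum_const, Finset.card_univ, hnQ, nsmul_eq_mul] at h2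
    have : (n : ℝ) * ((A.card : ℝ) / n) = (A.card : ℝ) := by field_simp
    linarith [h2]
  -- sum of Δ over all cosets is 0
  have hI'card : (Finset.univ.filter (fun u : (ZMod p)ˣ => (u : ZMod p) ∈ I)).card = I.card := by
    have himage : (Finset.univ.filter (fun u : (ZMod p)ˣ => (u : ZMod p) ∈ I)).image Units.val = I := by
      ext t
      constructor
      · intro ht
        obtain ⟨u, hu, rfl⟩ := Finset.mem_image.mp ht
        exact (Finset.mem_filter.mp hu).2
      · intro ht
        exact Finset.mem_image.mpr ⟨Units.mk0 t (fun h => h0I (h ▸ ht)),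
          Finset.mem_filter.mpr ⟨Finset.mem_univ _, ht⟩, rfl⟩
    conv_rhs => rw [← himage]
    exact (Finset.card_image_of_injective
      (Finset.univ.filter (fun u : (ZMod p)ˣ => (u : ZMod p) ∈ I)) Units.val_injective).symm
  have hsumΔ : ∑ ξ : (ZMod p)ˣ ⧸ Γ, Δ ξ = 0 := by
    have h2 : ∑ ξ : (ZMod p)ˣ ⧸ Γ,
        (Finset.univ.filter (fun u : (ZMod p)ˣ =>
          ((QuotientGroup.mk u : (ZMod p)ˣ ⧸ Γ) = ξ) ∧ (u : ZMod p) ∈ I)).card = I.card := by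
      rw [← hI'card]
      rw [Finset.card_eq_sum_card_fiberwise
        (s := Finset.univ.filter (fun u : (ZMod p)ˣ => (u : ZMod p) ∈ I))
        (t := Finset.univ) (f := fun u => (QuotientGroup.mk u : (ZMod p)ˣ ⧸ Γ))
        (fun u _ => Finset.mem_univ _)]
      refine Finset.sum_congr rfl fun ξ _ => congrArg Finset.card ?_
      rw [Finset.filter_filter]
      exact Finset.filter_congr fun u _ => and_comm
    have h1 : ∑ ξ : (ZMod p)ˣ ⧸ Γ,
        ((Finset.univ.filter (fun u : (ZMod p)ˣ =>
          ((QuotientGroup.mk u : (ZMod p)ˣ ⧸ Γ) = ξ) ∧ (u : ZMod p) ∈ I)).card : ℝ)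
          = (I.card : ℝ) := by exact_mod_cast congrArg (Nat.cast (R := ℝ)) h2
    have h2 : ∑ ξ : (ZMod p)ˣ ⧸ Γ, (Δ ξ + (I.card : ℝ) / n) = (I.card : ℝ) := by
      exact (Finset.sum_congr rfl fun ξ _ => (hΔA ξ).symm).trans h1
    rw [Finset.sum_add_distrib, Finset.sum_const, Finset.card_univ, hnQ, nsmul_eq_mul] at h2
    have : (n : ℝ) * ((I.card : ℝ) / n) = (I.card : ℝ) := by field_simp
    linarith [h2]
  have hsumΔ' : ∑ ξ : (ZMod p)ˣ ⧸ Γ, Δ (QuotientGroup.mk α * ξ) = 0 := by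
    have h := Equiv.sum_comp (Equiv.mulLeft (QuotientGroup.mk α : (ZMod p)ˣ ⧸ Γ)) Δ
    simp only [Equiv.coe_mulLeft] at h
    rw [h, hsumΔ]
  -- the count lemma for a fixed unit u
  have hcount : ∀ u : (ZMod p)ˣ,
      ((Finset.univ.filter (fun γ : Γ =>
        (((α * (γ : (ZMod p)ˣ)) : (ZMod p)ˣ) : ZMod p) * (u : ZMod p) ∈ I)).card : ℝ)
        = Δ (QuotientGroup.mk α * QuotientGroup.mk u) + (I.card : ℝ) / n := by
    intro u
    have hfil : Finset.univ.filter (fun γ : Γ =>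
          (((α * (γ : (ZMod p)ˣ)) : (ZMod p)ˣ) : ZMod p) * (u : ZMod p) ∈ I)
        = Finset.univ.filter (fun γ : Γ =>
          (((α * u * (γ : (ZMod p)ˣ)) : (ZMod p)ˣ) : ZMod p) ∈ I) := by
      refine Finset.filter_congr fun γ _ => ?_
      have : (((α * (γ : (ZMod p)ˣ)) : (ZMod p)ˣ) : ZMod p) * (u : ZMod p)
          = (((α * u * (γ : (ZMod p)ˣ)) : (ZMod p)ˣ) : ZMod p) := by
        simp [Units.val_mul]; ring
      rw [this]
    have hcard : (Finset.univ.filter (fun γ : Γ =>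
          (((α * u * (γ : (ZMod p)ˣ)) : (ZMod p)ˣ) : ZMod p) ∈ I)).card
        = Nat.card {γ : Γ // (((α * u * (γ : (ZMod p)ˣ)) : (ZMod p)ˣ) : ZMod p) ∈ I} := by
      rw [Nat.card_eq_fintype_card, Fintype.card_subtype]
    have hmk : (QuotientGroup.mk (α * u) : (ZMod p)ˣ ⧸ Γ)
        = QuotientGroup.mk α * QuotientGroup.mk u := rfl
    have h := hΔ (α * u)
    rw [hmk] at h
    rw [hfil, hcard, h]
    ring
  -- main transformation of the left sum
  have key : ∑ γ : Γ, (((A.image (fun t =>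
        (((α * (γ : (ZMod p)ˣ)) : (ZMod p)ˣ) : ZMod p) * t)) ∩ I).card : ℝ)
      = ∑ ξ : (ZMod p)ˣ ⧸ Γ, (a ξ + (A.card : ℝ) / n) *
          (Δ (QuotientGroup.mk α * ξ) + (I.card : ℝ) / n) := by
    have himg : ∀ γ : Γ, ((A.image (fun t =>
          (((α * (γ : (ZMod p)ˣ)) : (ZMod p)ˣ) : ZMod p) * t)) ∩ I).card
        = (A.filter (fun t =>
          (((α * (γ : (ZMod p)ˣ)) : (ZMod p)ˣ) : ZMod p) * t ∈ I)).card := by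
      intro γ
      rw [← Finset.card_image_of_injective
        (A.filter (fun t => (((α * (γ : (ZMod p)ˣ)) : (ZMod p)ˣ) : ZMod p) * t ∈ I))
        (mul_right_injective₀ (Units.ne_zero (α * (γ : (ZMod p)ˣ))))]
      congr 1
      ext y
      simp only [Finset.mem_inter, Finset.mem_image, Finset.mem_filter]
      constructor
      · rintro ⟨⟨t, ht, rfl⟩, hy⟩
        exact ⟨t, ⟨ht, hy⟩, rfl⟩
      · rintro ⟨t, ⟨ht, hy⟩, rfl⟩
        exact ⟨⟨t, ht, rfl⟩, hy⟩
    calc ∑ γ : Γ, (((A.image (fun t =>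
            (((α * (γ : (ZMod p)ˣ)) : (ZMod p)ˣ) : ZMod p) * t)) ∩ I).card : ℝ)
        = ∑ γ : Γ, ∑ t ∈ A, (if (((α * (γ : (ZMod p)ˣ)) : (ZMod p)ˣ) : ZMod p) * t ∈ I
            then (1 : ℝ) else 0) := by
          refine Finset.sum_congr rfl fun γ _ => ?_
          rw [himg γ, Finset.sum_boole]
      _ = ∑ t ∈ A, ∑ γ : Γ, (if (((α * (γ : (ZMod p)ˣ)) : (ZMod p)ˣ) : ZMod p) * t ∈ I
            then (1 : ℝ) else 0) := Finset.sum_comm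
      _ = ∑ t ∈ A, ((Finset.univ.filter (fun γ : Γ =>
            (((α * (γ : (ZMod p)ˣ)) : (ZMod p)ˣ) : ZMod p) * t ∈ I)).card : ℝ) := by
          refine Finset.sum_congr rfl fun t _ => ?_
          rw [Finset.sum_boole]
      _ = ∑ u ∈ A', ((Finset.univ.filter (fun γ : Γ =>
            (((α * (γ : (ZMod p)ˣ)) : (ZMod p)ˣ) : ZMod p) * (u : ZMod p) ∈ I)).card : ℝ) := by
          refine (Finset.sum_bij' (i := fun (u : (ZMod p)ˣ) (_ : u ∈ A') => (u : ZMod p))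
            (j := fun t ht => Units.mk0 t (fun h => h0 (h ▸ ht))) ?_ ?_ ?_ ?_ ?_).symm
          · intro u hu; simpa [hA'] using hu
          · intro t ht; simpa [hA'] using ht
          · intro u hu; exact Units.ext rfl
          · intro t ht; rfl
          · intro u hu; rfl
      _ = ∑ u ∈ A', (Δ (QuotientGroup.mk α * QuotientGroup.mk u) + (I.card : ℝ) / n) := by
          exact Finset.sum_congr rfl fun u _ => hcount u
      _ = ∑ ξ : (ZMod p)ˣ ⧸ Γ, ∑ u ∈ A'.filter
            (fun u => (QuotientGroup.mk u : (ZMod p)ˣ ⧸ Γ) = ξ),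
            (Δ (QuotientGroup.mk α * QuotientGroup.mk u) + (I.card : ℝ) / n) :=
          (Finset.sum_fiberwise A' (fun u => (QuotientGroup.mk u : (ZMod p)ˣ ⧸ Γ)) _).symm
      _ = ∑ ξ : (ZMod p)ˣ ⧸ Γ, (a ξ + (A.card : ℝ) / n) *
            (Δ (QuotientGroup.mk α * ξ) + (I.card : ℝ) / n) := by
          refine Finset.sum_congr rfl fun ξ _ => ?_
          rw [Finset.sum_congr rfl (fun u hu => by
            rw [(Finset.mem_filter.mp hu).2] :
            ∀ u ∈ A'.filter (fun u => (QuotientGroup.mk u : (ZMod p)ˣ ⧸ Γ) = ξ),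
              Δ (QuotientGroup.mk α * QuotientGroup.mk u) + (I.card : ℝ) / n
                = Δ (QuotientGroup.mk α * ξ) + (I.card : ℝ) / n)]
          rw [Finset.sum_const, nsmul_eq_mul, haA ξ]
  -- expand the product sum
  have hexp : ∑ ξ : (ZMod p)ˣ ⧸ Γ, (a ξ + (A.card : ℝ) / n) *
        (Δ (QuotientGroup.mk α * ξ) + (I.card : ℝ) / n)
      = (∑ ξ : (ZMod p)ˣ ⧸ Γ, a ξ * Δ (QuotientGroup.mk α * ξ))
        + (A.card : ℝ) * (I.card : ℝ) / n := by
    have hterm : ∀ ξ : (ZMod p)ˣ ⧸ Γ, (a ξ + (A.card : ℝ) / n) *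
          (Δ (QuotientGroup.mk α * ξ) + (I.card : ℝ) / n)
        = a ξ * Δ (QuotientGroup.mk α * ξ) + (I.card : ℝ) / n * a ξ
          + (A.card : ℝ) / n * Δ (QuotientGroup.mk α * ξ)
          + (A.card : ℝ) / n * ((I.card : ℝ) / n) := fun ξ => by ring
    rw [Finset.sum_congr rfl fun ξ _ => hterm ξ]
    rw [Finset.sum_add_distrib, Finset.sum_add_distrib, Finset.sum_add_distrib,
      ← Finset.mul_sum, ← Finset.mul_sum, hsuma, hsumΔ', Finset.sum_const,
      Finset.card_univ, hnQ, nsmul_eq_mul]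
    field_simp
    ring
  -- finish
  rw [finsum_eq_sum_of_fintype, finsum_eq_sum_of_fintype, key, hexp]
  rw [← hmul]
  field_simp
  ring
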